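/- arXiv:2504.15204 — 2 statements merged into one kernel-verified Lean document; each statement's English description precedes it below -/
import Mathlib

section
/- Let γ : Fin n → ℝ with 0 < γ_i < 1 for all i, let ŷ ∈ 𝔽₂ⁿ, let P be the associated likelihood weight, let I ⊆ Fin n be an index set, and let T = {ŷ ⊕ 1_K : K ⊆ I} be the set of Chase testwords. Then the total likelihood of the union over all testwords of their restricted radius-1 Hamming balls with respect to the coordinates outside I satisfies P(⋃_{τ ∈ T} B_1(τ, I)) = (1 + Σ_{j ∉ I} (1 − γ_j)/γ_j) · ∏_{j ∉ I} γ_j. -/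
open Finset

/-- The restricted Hamming ball `B_r(v, K)`: vectors within Hamming distance
`r` of `v` that agree with `v` on all positions in `K`. -/
def rBall {n : ℕ} (r : ℕ) (v : Fin n → ZMod 2) (K : Finset (Fin n)) :
    Finset (Fin n → ZMod 2) :=
  Finset.univ.filter (fun w => hammingDist v w ≤ r ∧ ∀ i ∈ K, w i = v i)

/-- The likelihood weight of a vector `v`, given parameters `γ` and
hard-decision vector `yh`. -/
def lik {n : ℕ} (γ : Fin n → ℝ) (yh : Fin n → ZMod 2) (v : Fin n → ZMod 2) : ℝ :=
  ∏ i, if v i = yh i then γ i else 1 - γ i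

/-- The indicator vector `1_K ∈ 𝔽₂ⁿ` of a set of positions `K`. -/
def indicatorVec {n : ℕ} (K : Finset (Fin n)) : Fin n → ZMod 2 :=
  fun i => if i ∈ K then 1 else 0

/-- The Chase testword obtained from the hard decision `yh` by flipping the
positions in `K`, i.e. `ŷ ⊕ 1_K`. -/
def chaseTestword {n : ℕ} (yh : Fin n → ZMod 2) (K : Finset (Fin n)) :
    Fin n → ZMod 2 :=
  fun i => yh i + indicatorVec K i

lemma zmod2_ne_add_one (a b : ZMod 2) (h : a ≠ b) : b + 1 = a := by revert a b; decide

lemma chase_ne_iff {n : ℕ} (yh : Fin n → ZMod 2) (F : Finset (Fin n)) (i : Fin n) :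
    chaseTestword yh F i ≠ yh i ↔ i ∈ F := by
  unfold chaseTestword indicatorVec
  by_cases h : i ∈ F <;> simp [h]

/-- The likelihood of the union over all Chase testwords of their restricted
radius-1 Hamming balls with respect to the coordinates outside `I`:
`P(⋃_{τ ∈ T} B_1(τ, I)) = (1 + Σ_{j ∉ I} (1−γ_j)/γ_j) · ∏_{j ∉ I} γ_j`. -/
theorem likelihood_union_chase_balls_one
    (n : ℕ) (γ : Fin n → ℝ) (hγ : ∀ i, 0 < γ i ∧ γ i < 1)
    (yh : Fin n → ZMod 2) (I : Finset (Fin n)) :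
    ∑ w ∈ (I.powerset.image (chaseTestword yh)).biUnion (fun τ => rBall 1 τ I),
        lik γ yh w =
      (1 + ∑ j ∈ Iᶜ, (1 - γ j) / γ j) * ∏ j ∈ Iᶜ, γ j := by
  classical
  set Dset : Finset (Finset (Fin n)) := (Iᶜ.powerset).filter (fun D => D.card ≤ 1) with hDset
  have key : ∑ w ∈ (I.powerset.image (chaseTestword yh)).biUnion (fun τ => rBall 1 τ I),
        lik γ yh w =
      ∑ p ∈ I.powerset ×ˢ Dset,
        (∏ i ∈ I, if i ∈ p.1 then 1 - γ i else γ i) *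
        (∏ j ∈ Iᶜ, if j ∈ p.2 then 1 - γ j else γ j) := by
    refine Finset.sum_nbij'
      (i := fun w => (I.filter (fun i => w i ≠ yh i), Iᶜ.filter (fun i => w i ≠ yh i)))
      (j := fun p => chaseTestword yh (p.1 ∪ p.2)) ?_ ?_ ?_ ?_ ?_
    · -- membership: w in biUnion → pair in product
      intro w hw
      simp only [mem_biUnion, mem_image] at hw
      obtain ⟨τ, ⟨K, hK, rfl⟩, hwb⟩ := hw
      rw [mem_powerset] at hK
      simp only [rBall, mem_filter, mem_univ, true_and] at hwb
      obtain ⟨hdist, hagree⟩ := hwb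
      rw [mem_product, mem_powerset, hDset, mem_filter, mem_powerset]
      refine ⟨filter_subset _ _, filter_subset _ _, ?_⟩
      have hsub : Iᶜ.filter (fun i => w i ≠ yh i) ⊆
          ({i | chaseTestword yh K i ≠ w i} : Finset (Fin n)) := by
        intro j hj
        simp only [mem_filter, mem_compl] at hj
        have hjK : j ∉ K := fun h => hj.1 (hK h)
        have : chaseTestword yh K j = yh j := by
          unfold chaseTestword indicatorVec; simp [hjK]
        simp only [mem_filter, mem_univ, true_and]
        rw [this]
        exact fun h => hj.2 h.symm
      calc (Iᶜ.filter (fun i => w i ≠ yh i)).card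
          ≤ ({i | chaseTestword yh K i ≠ w i} : Finset (Fin n)).card := card_le_card hsub
        _ = hammingDist (chaseTestword yh K) w := rfl
        _ ≤ 1 := hdist
    · -- membership: pair in product → chase(K∪D) in biUnion
      intro p hp
      rw [mem_product, mem_powerset, hDset, mem_filter, mem_powerset] at hp
      obtain ⟨hK, hD, hDcard⟩ := hp
      rw [mem_biUnion]
      refine ⟨chaseTestword yh p.1, mem_image_of_mem _ (mem_powerset.2 hK), ?_⟩
      simp only [rBall, mem_filter, mem_univ, true_and]
      constructor
      · have hsub : ({i | chaseTestword yh p.1 i ≠ chaseTestword yh (p.1 ∪ p.2) i} :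
            Finset (Fin n)) ⊆ p.2 := by
          intro i hi
          simp only [mem_filter, mem_univ, true_and, chaseTestword, indicatorVec] at hi
          by_cases h1 : i ∈ p.1
          · simp [h1, mem_union.2 (Or.inl h1)] at hi
          · by_cases h2 : i ∈ p.2
            · exact h2
            · simp [h1, h2, mem_union] at hi
        calc hammingDist (chaseTestword yh p.1) (chaseTestword yh (p.1 ∪ p.2)) ≤ p.2.card :=
              card_le_card hsub
          _ ≤ 1 := hDcard
      · intro i hi
        have h2 : i ∉ p.2 := fun h => (mem_compl.1 (hD h)) hi
        unfold chaseTestword indicatorVec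
        simp [mem_union, h2]
    · -- left inverse
      intro w _
      funext i
      unfold chaseTestword indicatorVec
      by_cases h : w i = yh i
      · simp [h]
      · have hi : i ∈ I.filter (fun i => w i ≠ yh i) ∪ Iᶜ.filter (fun i => w i ≠ yh i) := by
          by_cases hI : i ∈ I
          · exact mem_union.2 (Or.inl (mem_filter.2 ⟨hI, h⟩))
          · exact mem_union.2 (Or.inr (mem_filter.2 ⟨mem_compl.2 hI, h⟩))
        simp only [hi, if_pos]
        exact zmod2_ne_add_one _ _ h
    · -- right inverse
      intro p hp
      rw [mem_product, mem_powerset, hDset, mem_filter, mem_powerset] at hp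
      obtain ⟨hK, hD, _⟩ := hp
      have hne : ∀ i, (chaseTestword yh (p.1 ∪ p.2) i ≠ yh i) ↔ i ∈ p.1 ∪ p.2 :=
        fun i => chase_ne_iff yh _ i
      ext i <;> simp only [mem_filter, hne, mem_union, mem_compl]
      · constructor
        · rintro ⟨hI, h | h⟩
          · exact h
          · exact absurd hI (mem_compl.1 (hD h))
        · exact fun h => ⟨hK h, Or.inl h⟩
      · constructor
        · rintro ⟨hI, h | h⟩
          · exact absurd (hK h) hI
          · exact h
        · exact fun h => ⟨mem_compl.1 (hD h), Or.inr h⟩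
    · -- values agree
      intro w _
      have : lik γ yh w = ∏ i, if w i ≠ yh i then 1 - γ i else γ i := by
        unfold lik
        exact Finset.prod_congr rfl fun i _ => by by_cases h : w i = yh i <;> simp [h]
      have h1 : ∏ i ∈ I, (if i ∈ I.filter (fun i => w i ≠ yh i) then 1 - γ i else γ i)
          = ∏ i ∈ I, (if w i ≠ yh i then 1 - γ i else γ i) :=
        Finset.prod_congr rfl fun i hi => by simp [Finset.mem_filter, hi]
      have h2 : ∏ j ∈ Iᶜ, (if j ∈ Iᶜ.filter (fun i => w i ≠ yh i) then 1 - γ j else γ j)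
          = ∏ j ∈ Iᶜ, (if w j ≠ yh j then 1 - γ j else γ j) :=
        Finset.prod_congr rfl fun i hi => by simp [Finset.mem_filter, hi]
      rw [this, h1, h2, ← Finset.prod_union disjoint_compl_right, Finset.union_compl]
  rw [key, Finset.sum_product]
  have factor1 : ∑ K ∈ I.powerset, ∏ i ∈ I, (if i ∈ K then 1 - γ i else γ i) = 1 := by
    have h : ∀ K ∈ I.powerset, (∏ i ∈ I, (if i ∈ K then 1 - γ i else γ i))
        = (∏ i ∈ K, (1 - γ i)) * ∏ i ∈ I \ K, γ i := by
      intro K hK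
      rw [mem_powerset] at hK
      rw [Finset.prod_ite, Finset.filter_mem_eq_inter, Finset.inter_eq_right.2 hK,
        ← Finset.sdiff_eq_filter]
    rw [Finset.sum_congr rfl h, ← Finset.prod_add]
    simp
  have hDeq : Dset = insert ∅ (Iᶜ.image fun j => ({j} : Finset (Fin n))) := by
    ext D
    rw [hDset, mem_filter, mem_powerset, mem_insert, mem_image]
    constructor
    · rintro ⟨hsub, hcard⟩
      rcases D.eq_empty_or_nonempty with rfl | hne
      · exact Or.inl rfl
      · obtain ⟨a, rfl⟩ := Finset.card_eq_one.1 (le_antisymm hcard (Finset.one_le_card.2 hne))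
        exact Or.inr ⟨a, hsub (mem_singleton_self a), rfl⟩
    · rintro (rfl | ⟨j, hj, rfl⟩) <;> simp_all
  have factor2 : ∑ D ∈ Dset, ∏ j ∈ Iᶜ, (if j ∈ D then 1 - γ j else γ j)
      = (1 + ∑ j ∈ Iᶜ, (1 - γ j) / γ j) * ∏ j ∈ Iᶜ, γ j := by
    have hnm : (∅ : Finset (Fin n)) ∉ Iᶜ.image fun j => ({j} : Finset (Fin n)) := by
      simp only [mem_image, not_exists]
      rintro j ⟨-, h⟩
      exact (Finset.singleton_ne_empty j) h
    rw [hDeq, Finset.sum_insert hnm,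
      Finset.sum_image (fun a _ b _ h => Finset.singleton_injective h)]
    have h0 : ∏ j ∈ Iᶜ, (if j ∈ (∅ : Finset (Fin n)) then 1 - γ j else γ j)
        = ∏ j ∈ Iᶜ, γ j := by simp
    have h1 : ∀ j ∈ Iᶜ, ∏ j' ∈ Iᶜ, (if j' ∈ ({j} : Finset (Fin n)) then 1 - γ j' else γ j')
        = (1 - γ j) / γ j * ∏ j' ∈ Iᶜ, γ j' := by
      intro j hj
      rw [← Finset.mul_prod_erase _ γ hj, ← Finset.mul_prod_erase _ _ hj]
      have hγj : γ j ≠ 0 := ne_of_gt (hγ j).1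
      rw [if_pos (mem_singleton_self j)]
      have : ∏ j' ∈ Iᶜ.erase j, (if j' ∈ ({j} : Finset (Fin n)) then 1 - γ j' else γ j')
          = ∏ j' ∈ Iᶜ.erase j, γ j' :=
        Finset.prod_congr rfl fun i hi => by
          rw [if_neg (by simp [Finset.ne_of_mem_erase hi])]
      rw [this]
      field_simp
    rw [h0, Finset.sum_congr rfl h1, ← Finset.sum_mul, add_mul, one_mul]
  calc ∑ K ∈ I.powerset, ∑ D ∈ Dset,
        (∏ i ∈ I, if i ∈ K then 1 - γ i else γ i) *
        (∏ j ∈ Iᶜ, if j ∈ D then 1 - γ j else γ j)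
      = (∑ K ∈ I.powerset, ∏ i ∈ I, if i ∈ K then 1 - γ i else γ i) *
        (∑ D ∈ Dset, ∏ j ∈ Iᶜ, if j ∈ D then 1 - γ j else γ j) := by
        rw [Finset.sum_mul_sum]
    _ = _ := by rw [factor1, factor2, one_mul]
end

section
/- Let γ : Fin n → ℝ with 0 < γ_i < 1 for all i, let ŷ ∈ 𝔽₂ⁿ, let P be the associated likelihood weight, let I ⊆ Fin n be an index set, and let T = {ŷ ⊕ 1_K : K ⊆ I} be the set of Chase testwords. For j ∉ I set ρ_j = (1 − γ_j)/γ_j. Then the total likelihood of the union over all testwords of their restricted radius-2 Hamming balls with respect to the coordinates outside I satisfies P(⋃_{τ ∈ T} B_2(τ, I)) = (1 + Σ_{j ∉ I} ρ_j + Σ_{j < j', j ∉ I, j' ∉ I} ρ_j · ρ_{j'}) · ∏_{j ∉ I} γ_j. -/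
open Finset

lemma zmod2_ne_iff {a b : ZMod 2} : a ≠ b ↔ a = b + 1 := by revert a b; decide

lemma chase_eq_iff {n : ℕ} (yh : Fin n → ZMod 2) (A : Finset (Fin n)) (i : Fin n) :
    chaseTestword yh A i = yh i ↔ i ∉ A := by
  by_cases h : i ∈ A <;> simp [chaseTestword, indicatorVec, h]

lemma prod_ite_subset {n : ℕ} (s D : Finset (Fin n)) (hD : D ⊆ s) (a b : Fin n → ℝ) :
    (∏ i ∈ s, if i ∈ D then a i else b i) = (∏ i ∈ D, a i) * ∏ i ∈ s \ D, b i := by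
  conv_lhs => rw [← Finset.union_sdiff_of_subset hD]
  rw [Finset.prod_union Finset.disjoint_sdiff]
  congr 1
  · exact Finset.prod_congr rfl fun i hi => by simp [hi]
  · exact Finset.prod_congr rfl fun i hi => by simp [(Finset.mem_sdiff.mp hi).2]

lemma rho_prod {n : ℕ} (γ : Fin n → ℝ) (hγ : ∀ i, γ i ≠ 0) (s D : Finset (Fin n))
    (hD : D ⊆ s) :
    (∏ j ∈ D, (1 - γ j) / γ j) * ∏ j ∈ s, γ j
      = (∏ j ∈ D, (1 - γ j)) * ∏ j ∈ s \ D, γ j := by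
  conv_lhs => rw [← Finset.union_sdiff_of_subset hD, Finset.prod_union Finset.disjoint_sdiff]
  rw [← mul_assoc, ← Finset.prod_mul_distrib]
  congr 1
  exact Finset.prod_congr rfl fun j _ => div_mul_cancel₀ _ (hγ j)

lemma biUnion_eq {n : ℕ} (yh : Fin n → ZMod 2) (I : Finset (Fin n)) :
    (I.powerset.image (chaseTestword yh)).biUnion (fun τ => rBall 2 τ I)
      = Finset.univ.filter
          (fun w => (Iᶜ.filter (fun j => w j ≠ yh j)).card ≤ 2) := by
  ext w
  simp only [mem_biUnion, mem_image, mem_powerset, rBall, mem_filter, mem_univ, true_and]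
  constructor
  · rintro ⟨τ, ⟨K, hK, rfl⟩, hd, hag⟩
    refine le_trans (Finset.card_le_card ?_) hd
    intro j hj
    simp only [mem_filter, mem_compl] at hj
    have hjK : j ∉ K := fun h => hj.1 (hK h)
    have hτ : chaseTestword yh K j = yh j := (chase_eq_iff yh K j).mpr hjK
    simp only [hammingDist, mem_filter, mem_univ, true_and]
    rw [hτ]
    exact fun h => hj.2 h.symm
  · intro h
    refine ⟨chaseTestword yh (I.filter fun i => w i ≠ yh i),
      ⟨_, Finset.filter_subset _ _, rfl⟩, ?_, ?_⟩
    · refine le_trans (Finset.card_le_card ?_) h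
      intro j hj
      simp only [hammingDist, mem_filter, mem_univ, true_and] at hj
      simp only [mem_filter, mem_compl]
      by_cases hjI : j ∈ I
      · exfalso
        apply hj
        by_cases hw : w j = yh j
        · rw [(chase_eq_iff yh _ j).mpr (by simp [hw]), hw]
        · have : j ∈ I.filter fun i => w i ≠ yh i := by simp [hjI, hw]
          rw [zmod2_ne_iff.mp hw]
          simp [chaseTestword, indicatorVec, this]
      · have : chaseTestword yh (I.filter fun i => w i ≠ yh i) j = yh j :=
          (chase_eq_iff yh (I.filter fun i => w i ≠ yh i) j).mpr (by simp [hjI])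
        rw [this] at hj
        exact ⟨hjI, fun hw => hj hw.symm⟩
    · intro i hi
      by_cases hw : w i = yh i
      · rw [(chase_eq_iff yh _ i).mpr (by simp [hw]), hw]
      · have : i ∈ I.filter fun i => w i ≠ yh i := by simp [hi, hw]
        rw [zmod2_ne_iff.mp hw]
        simp [chaseTestword, indicatorVec, this]

lemma sum_powersetCard_two {n : ℕ} (s : Finset (Fin n)) (f : Finset (Fin n) → ℝ) :
    ∑ D ∈ s.powersetCard 2, f D
      = ∑ j ∈ s, ∑ j' ∈ s.filter (fun j' => j < j'), f {j, j'} := by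
  rw [Finset.sum_sigma' s (fun j => s.filter (fun j' => j < j')) (fun j j' => f {j, j'})]
  symm
  apply Finset.sum_nbij (i := fun x => ({x.1, x.2} : Finset (Fin n)))
  · rintro ⟨a, b⟩ hab
    simp only [mem_sigma, mem_filter] at hab
    simp only [mem_powersetCard]
    constructor
    · intro x hx
      simp only [mem_insert, mem_singleton] at hx
      rcases hx with rfl | rfl
      exacts [hab.1, hab.2.1]
    · exact Finset.card_pair (ne_of_lt hab.2.2)
  · rintro ⟨a, b⟩ ha ⟨c, d⟩ hc heq
    simp only [mem_coe, mem_sigma, mem_filter] at ha hc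
    replace heq : ({a, b} : Finset (Fin n)) = {c, d} := heq
    have hab : a < b := ha.2.2
    have hcd : c < d := hc.2.2
    have haeq : a = c ∨ a = d := by
      have h : a ∈ ({c, d} : Finset (Fin n)) := heq ▸ (by simp)
      simpa using h
    have hbeq : b = c ∨ b = d := by
      have h : b ∈ ({c, d} : Finset (Fin n)) := heq ▸ (by simp)
      simpa using h
    have hceq : c = a ∨ c = b := by
      have h : c ∈ ({a, b} : Finset (Fin n)) := heq.symm ▸ (by simp)
      simpa using h
    have hac : a = c := by
      rcases haeq with h | h
      · exact h
      · exfalso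
        rcases hceq with h' | h'
        · rw [h', h] at hcd
          exact lt_irrefl _ hcd
        · rw [h'] at hcd
          rw [h] at hab
          exact lt_irrefl _ (hcd.trans hab)
    have hbd : b = d := by
      rcases hbeq with h | h
      · exfalso
        have hba : b = a := h.trans hac.symm
        rw [hba] at hab
        exact lt_irrefl _ hab
      · exact h
    subst hac
    subst hbd
    rfl
  · intro D hD
    simp only [mem_coe, mem_powersetCard] at hD
    obtain ⟨a, b, hne, rfl⟩ := Finset.card_eq_two.mp hD.2
    have ha : a ∈ s := hD.1 (by simp)
    have hb : b ∈ s := hD.1 (by simp)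
    rcases lt_or_gt_of_ne hne with hlt | hgt
    · exact ⟨⟨a, b⟩, by simp [mem_coe, Finset.mem_sigma, mem_filter, ha, hb, hlt], rfl⟩
    · exact ⟨⟨b, a⟩, by simp [mem_coe, Finset.mem_sigma, mem_filter, ha, hb, hgt],
        Finset.pair_comm b a ▸ rfl⟩
  · intros; rfl

/-- The likelihood of the union over all Chase testwords of their restricted
radius-2 Hamming balls with respect to the coordinates outside `I`, where
`ρ_j = (1−γ_j)/γ_j` for `j ∉ I`:
`P(⋃_{τ ∈ T} B_2(τ, I)) = (1 + Σ_{j ∉ I} ρ_j + Σ_{j<j', j,j' ∉ I} ρ_j·ρ_{j'})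
                            · ∏_{j ∉ I} γ_j`. -/
theorem likelihood_union_chase_balls_two
    (n : ℕ) (γ : Fin n → ℝ) (hγ : ∀ i, 0 < γ i ∧ γ i < 1)
    (yh : Fin n → ZMod 2) (I : Finset (Fin n)) :
    ∑ w ∈ (I.powerset.image (chaseTestword yh)).biUnion (fun τ => rBall 2 τ I),
        lik γ yh w =
      (1 + ∑ j ∈ Iᶜ, (1 - γ j) / γ j
         + ∑ j ∈ Iᶜ, ∑ j' ∈ Iᶜ.filter (fun j' => j < j'),
             ((1 - γ j) / γ j) * ((1 - γ j') / γ j')) * ∏ j ∈ Iᶜ, γ j := by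
  have hγ0 : ∀ i, γ i ≠ 0 := fun i => ne_of_gt (hγ i).1
  rw [biUnion_eq]
  -- reindex by flip sets
  have key : ∑ w ∈ Finset.univ.filter
        (fun w => (Iᶜ.filter (fun j => w j ≠ yh j)).card ≤ 2), lik γ yh w
      = ∑ p ∈ I.powerset ×ˢ (Iᶜ.powerset.filter fun D => D.card ≤ 2),
          (∏ i ∈ I, if i ∈ p.1 then 1 - γ i else γ i)
            * ∏ j ∈ Iᶜ, if j ∈ p.2 then 1 - γ j else γ j := by
    apply Finset.sum_nbij'
      (i := fun w => (I.filter fun i => w i ≠ yh i, Iᶜ.filter fun j => w j ≠ yh j))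
      (j := fun p => chaseTestword yh (p.1 ∪ p.2))
    · intro w hw
      simp only [mem_filter, mem_univ, true_and] at hw
      simp only [mem_product, mem_powerset, mem_filter]
      exact ⟨Finset.filter_subset _ _, ⟨Finset.filter_subset _ _, hw⟩⟩
    · rintro ⟨K, D⟩ hp
      simp only [mem_product, mem_powerset, mem_filter] at hp
      simp only [mem_filter, mem_univ, true_and]
      refine le_trans (le_of_eq (congrArg Finset.card ?_)) hp.2.2
      ext j
      simp only [mem_filter, mem_compl]
      constructor
      · rintro ⟨hjI, hne⟩
        have : j ∈ K ∪ D := by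
          by_contra hnot
          exact hne ((chase_eq_iff yh _ j).mpr hnot)
        rcases Finset.mem_union.mp this with h | h
        · exact absurd (hp.1 h) hjI
        · exact h
      · intro hjD
        have hjI : j ∉ I := fun h => (Finset.mem_compl.mp (hp.2.1 hjD)) h
        refine ⟨hjI, ?_⟩
        intro heq
        exact ((chase_eq_iff yh (K ∪ D) j).mp heq) (Finset.mem_union_right _ hjD)
    · intro w hw
      funext i
      by_cases hne : w i = yh i
      · rw [(chase_eq_iff yh _ i).mpr ?_, hne]
        simp [hne]
      · have hiU : i ∈ (I.filter fun i => w i ≠ yh i) ∪ (Iᶜ.filter fun j => w j ≠ yh j) := by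
          by_cases hiI : i ∈ I
          · exact Finset.mem_union_left _ (by simp [hiI, hne])
          · exact Finset.mem_union_right _ (by simp [hiI, hne])
        rw [zmod2_ne_iff.mp hne]
        simp [chaseTestword, indicatorVec, hiU]
    · rintro ⟨K, D⟩ hp
      simp only [mem_product, mem_powerset, mem_filter] at hp
      have hmem : ∀ j, chaseTestword yh (K ∪ D) j ≠ yh j ↔ j ∈ K ∪ D := by
        intro j
        rw [← not_iff_not]
        simp [chase_eq_iff]
      refine Prod.ext ?_ ?_
      · ext i
        simp only [mem_filter, hmem, Finset.mem_union]
        constructor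
        · rintro ⟨hiI, h | h⟩
          · exact h
          · exact absurd hiI (Finset.mem_compl.mp (hp.2.1 h))
        · exact fun h => ⟨hp.1 h, Or.inl h⟩
      · ext j
        simp only [mem_filter, hmem, Finset.mem_union, mem_compl]
        constructor
        · rintro ⟨hjI, h | h⟩
          · exact absurd (hp.1 h) hjI
          · exact h
        · exact fun h => ⟨Finset.mem_compl.mp (hp.2.1 h), Or.inr h⟩
    · intro w hw
      rw [lik, ← Finset.prod_mul_prod_compl I]
      congr 1
      · refine Finset.prod_congr rfl fun i hi => ?_
        by_cases h : w i = yh i <;> simp [h, hi]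
      · refine Finset.prod_congr rfl fun j hj => ?_
        by_cases h : w j = yh j <;> simp [h, hj]
  rw [key, Finset.sum_product]
  dsimp only
  rw [← Finset.sum_mul_sum (f := fun K => ∏ i ∈ I, if i ∈ K then 1 - γ i else γ i)
    (g := fun D => ∏ j ∈ Iᶜ, if j ∈ D then 1 - γ j else γ j)]
  -- first factor is 1
  have fac1 : ∑ K ∈ I.powerset, ∏ i ∈ I, (if i ∈ K then 1 - γ i else γ i) = 1 := by
    rw [Finset.sum_congr rfl (fun K hK =>
      prod_ite_subset I K (Finset.mem_powerset.mp hK) _ _)]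
    rw [← Finset.prod_add]
    simp
  rw [fac1, one_mul]
  -- second factor
  have hsplit : Iᶜ.powerset.filter (fun D => D.card ≤ 2)
      = (Iᶜ.powersetCard 0 ∪ Iᶜ.powersetCard 1) ∪ Iᶜ.powersetCard 2 := by
    ext D
    simp only [mem_filter, mem_powerset, Finset.mem_union, mem_powersetCard]
    constructor
    · rintro ⟨h1, h2⟩
      have hc : D.card = 0 ∨ D.card = 1 ∨ D.card = 2 := by omega
      rcases hc with h | h | h
      · exact Or.inl (Or.inl ⟨h1, h⟩)
      · exact Or.inl (Or.inr ⟨h1, h⟩)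
      · exact Or.inr ⟨h1, h⟩
    · rintro ((⟨h1, h2⟩ | ⟨h1, h2⟩) | ⟨h1, h2⟩) <;> exact ⟨h1, by omega⟩
  rw [hsplit, Finset.sum_union, Finset.sum_union]
  · -- compute the three pieces
    have e0 : ∑ D ∈ Iᶜ.powersetCard 0, (∏ j ∈ Iᶜ, if j ∈ D then 1 - γ j else γ j)
        = ∏ j ∈ Iᶜ, γ j := by
      rw [Finset.powersetCard_zero, Finset.sum_singleton]
      simp
    have e1 : ∑ D ∈ Iᶜ.powersetCard 1, (∏ j ∈ Iᶜ, if j ∈ D then 1 - γ j else γ j)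
        = ∑ j ∈ Iᶜ, ((1 - γ j) / γ j) * ∏ j' ∈ Iᶜ, γ j' := by
      rw [Finset.powersetCard_one, Finset.sum_map]
      simp only [Function.Embedding.coeFn_mk]
      refine Finset.sum_congr rfl fun j hj => ?_
      have h1 : ({j} : Finset (Fin n)) ⊆ Iᶜ := by simp [hj]
      rw [prod_ite_subset _ _ h1, Finset.prod_singleton]
      have h3 := rho_prod γ hγ0 Iᶜ {j} h1
      rw [Finset.prod_singleton, Finset.prod_singleton] at h3
      exact h3.symm
    have e2 : ∑ D ∈ Iᶜ.powersetCard 2, (∏ j ∈ Iᶜ, if j ∈ D then 1 - γ j else γ j)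
        = ∑ j ∈ Iᶜ, ∑ j' ∈ Iᶜ.filter (fun j' => j < j'),
            ((1 - γ j) / γ j) * ((1 - γ j') / γ j') * ∏ i ∈ Iᶜ, γ i := by
      rw [sum_powersetCard_two]
      refine Finset.sum_congr rfl fun j hj => ?_
      refine Finset.sum_congr rfl fun j' hj' => ?_
      simp only [mem_filter] at hj'
      have hne : j ≠ j' := ne_of_lt hj'.2
      have h2 : ({j, j'} : Finset (Fin n)) ⊆ Iᶜ := by
        intro x hx
        simp only [mem_insert, mem_singleton] at hx
        rcases hx with rfl | rfl
        exacts [hj, hj'.1]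
      rw [prod_ite_subset _ _ h2, Finset.prod_insert (by simp [hne]), Finset.prod_singleton]
      have h3 := rho_prod γ hγ0 Iᶜ {j, j'} h2
      rw [Finset.prod_insert (by simp [hne]), Finset.prod_insert (by simp [hne]),
        Finset.prod_singleton, Finset.prod_singleton] at h3
      exact h3.symm
    rw [e0, e1, e2, add_mul, add_mul, one_mul, Finset.sum_mul]
    congr 1
    rw [Finset.sum_mul]
    refine Finset.sum_congr rfl fun j hj => ?_
    rw [Finset.sum_mul]
  · rw [Finset.disjoint_left]
    intro D h1 h2
    simp only [mem_powersetCard] at h1 h2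
    have e1 := h1.2
    have e2 := h2.2
    omega
  · rw [Finset.disjoint_union_left]
    constructor
    · rw [Finset.disjoint_left]
      intro D h1 h2
      simp only [mem_powersetCard] at h1 h2
      have e1 := h1.2
      have e2 := h2.2
      omega
    · rw [Finset.disjoint_left]
      intro D h1 h2
      simp only [mem_powersetCard] at h1 h2
      have e1 := h1.2
      have e2 := h2.2
      omega
end
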